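/- With the notation of the paper, for club-many α, the relation R_EF^α is transitive: if II has winning strategies σ₁ in EF^κ_ω(A↾α, B↾α) and σ₂ in EF^κ_ω(B↾α, C↾α), and α is closed under the composition and range/domain coding functions, then II has a winning strategy in EF^κ_ω(A↾α, C↾α). -/
import Mathlib


open Set Cardinal FirstOrder FirstOrder.Language

variable {L : Language}

/-- A set of pairs `g` is (the graph of) a partial isomorphism between the
structures `A` and `B`: it is functional, injective, and preserves all
relations in both directions. -/
def IsPartialIso (A B : L.Structure Ordinal.{0}) (g : Set (Ordinal × Ordinal)) : Prop :=
  (∀ p ∈ g, ∀ q ∈ g, p.1 = q.1 → p.2 = q.2) ∧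
  (∀ p ∈ g, ∀ q ∈ g, p.2 = q.2 → p.1 = q.1) ∧
  ∀ (n : ℕ) (R : L.Relations n) (v : Fin n → Ordinal × Ordinal), (∀ i, v i ∈ g) →
    (A.RelMap R (fun i => (v i).1) ↔ B.RelMap R (fun i => (v i).2))

/-- The moves of player I up to round `n` (as a list). -/
def histMoves (β : ℕ → Ordinal) (n : ℕ) : List Ordinal := (List.range (n + 1)).map β

/-- Legality of I's move at round `n` in the (unrestricted) game `EF^κ_ω`:
moves are ordinals `< κ` and the chosen sets `X_{β_n}` strictly increase. -/
def ILegalAt (κo : Ordinal) (X : Ordinal → Set Ordinal) (β : ℕ → Ordinal) (n : ℕ) : Prop :=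
  β n < κo ∧ (n = 0 → (X (β 0)).Nonempty) ∧ ∀ m, n = m + 1 → X (β m) ⊂ X (β n)

/-- Legality of II's move at round `n` in the (unrestricted) game `EF^κ_ω`:
the chosen partial functions `f_{θ_n}` strictly increase and cover `X_{β_n}`. -/
def IILegalAt (κo : Ordinal) (X : Ordinal → Set Ordinal)
    (Fp : Ordinal → Set (Ordinal × Ordinal)) (β θ : ℕ → Ordinal) (n : ℕ) : Prop :=
  θ n < κo ∧ X (β n) ⊆ Prod.fst '' Fp (θ n) ∧ X (β n) ⊆ Prod.snd '' Fp (θ n) ∧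
    ∀ m, n = m + 1 → Fp (θ m) ⊂ Fp (θ n)

/-- `σ` is a winning strategy for player II in `EF^κ_ω(A,B)`. -/
def IsWinFull (A B : L.Structure Ordinal) (κo : Ordinal) (X : Ordinal → Set Ordinal)
    (Fp : Ordinal → Set (Ordinal × Ordinal)) (σ : List Ordinal → Ordinal) : Prop :=
  ∀ β : ℕ → Ordinal, (∀ n, ILegalAt κo X β n) →
    (∀ n, IILegalAt κo X Fp β (fun k => σ (histMoves β k)) n) ∧
    IsPartialIso A B (⋃ n, Fp (σ (histMoves β n)))

/-- Legality of I's move at round `n` in the restricted game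
`EF^κ_ω(A↾α, B↾α)` : everything lives below `α`. -/
def ILegalResAt (α : Ordinal) (X : Ordinal → Set Ordinal) (β : ℕ → Ordinal) (n : ℕ) : Prop :=
  β n < α ∧ X (β n) ⊆ Set.Iio α ∧ ∀ m, n = m + 1 → X (β m) ⊆ X (β n)

/-- Legality of II's move at round `n` in the restricted game. -/
def IILegalResAt (α : Ordinal) (X : Ordinal → Set Ordinal)
    (Fp : Ordinal → Set (Ordinal × Ordinal)) (β θ : ℕ → Ordinal) (n : ℕ) : Prop :=
  θ n < α ∧ Fp (θ n) ⊆ (Set.Iio α) ×ˢ (Set.Iio α) ∧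
    X (β n) ⊆ Prod.fst '' Fp (θ n) ∧ X (β n) ⊆ Prod.snd '' Fp (θ n) ∧
    ∀ m, n = m + 1 → Fp (θ m) ⊆ Fp (θ n)

/-- `σ` is a winning strategy for player II in the restricted game
`EF^κ_ω(A↾α, B↾α)`. -/
def IsWinRes (A B : L.Structure Ordinal) (α : Ordinal) (X : Ordinal → Set Ordinal)
    (Fp : Ordinal → Set (Ordinal × Ordinal)) (σ : List Ordinal → Ordinal) : Prop :=
  ∀ β : ℕ → Ordinal, (∀ n, ILegalResAt α X β n) →
    (∀ n, IILegalResAt α X Fp β (fun k => σ (histMoves β k)) n) ∧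
    IsPartialIso A B (⋃ n, Fp (σ (histMoves β n)))

/-- `C ⊆ κ` is club in `κ`. -/
def IsClubIn (κ : Cardinal.{0}) (C : Set Ordinal.{0}) : Prop :=
  C ⊆ Set.Iio κ.ord ∧
  (∀ β < κ.ord, ∃ α ∈ C, β < α) ∧
  ∀ B ⊆ C, B.Nonempty → sSup B < κ.ord → sSup B ∈ C

/-- The enumerations `(X_γ)_{γ<κ}` of `P_κ(κ)` and `(f_γ)_{γ<κ}` of all partial
functions with small domain and range are adequate. -/
def GoodEnum (κ : Cardinal.{0}) (X : Ordinal → Set Ordinal)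
    (Fp : Ordinal → Set (Ordinal × Ordinal)) : Prop :=
  (∀ γ < κ.ord, X γ ⊆ Set.Iio κ.ord ∧ #(X γ) < Cardinal.lift.{1} κ) ∧
  (∀ s : Set Ordinal, s ⊆ Set.Iio κ.ord → #s < Cardinal.lift.{1} κ →
    ∃ γ < κ.ord, X γ = s) ∧
  (∀ γ < κ.ord, Fp γ ⊆ (Set.Iio κ.ord) ×ˢ (Set.Iio κ.ord) ∧ #(Fp γ) < Cardinal.lift.{1} κ ∧
    ∀ p ∈ Fp γ, ∀ q ∈ Fp γ, p.1 = q.1 → p.2 = q.2) ∧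
  (∀ g : Set (Ordinal × Ordinal), g ⊆ (Set.Iio κ.ord) ×ˢ (Set.Iio κ.ord) →
    #g < Cardinal.lift.{1} κ → (∀ p ∈ g, ∀ q ∈ g, p.1 = q.1 → p.2 = q.2) →
    ∃ γ < κ.ord, Fp γ = g)

namespace REFtrans

lemma histMoves_succ (s : ℕ → Ordinal) (n : ℕ) :
    histMoves s (n + 1) = histMoves s n ++ [s (n + 1)] := by
  simp [histMoves, List.range_succ]

lemma histMoves_length (s : ℕ → Ordinal) (n : ℕ) : (histMoves s n).length = n + 1 := by
  simp [histMoves]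

lemma histMoves_zero (s : ℕ → Ordinal) : histMoves s 0 = [s 0] := by
  simp [histMoves, List.range_succ]

lemma histMoves_isEmpty (s : ℕ → Ordinal) (n : ℕ) : (histMoves s n).isEmpty = false := by
  cases n with
  | zero => simp [histMoves_zero]
  | succ m => simp [histMoves_succ]

lemma histMoves_getLastD (s : ℕ → Ordinal) (n : ℕ) (x : Ordinal) :
    (histMoves s n).getLastD x = s n := by
  cases n with
  | zero => simp [histMoves_zero]
  | succ m => rw [histMoves_succ]; simp

lemma histMoves_getLast? (s : ℕ → Ordinal) (n : ℕ) :
    (histMoves s n).getLast? = some (s n) := by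
  cases n with
  | zero => simp [histMoves_zero]
  | succ m => rw [histMoves_succ]; simp

lemma histMoves_dropLast (s : ℕ → Ordinal) (n : ℕ) :
    (histMoves s (n + 1)).dropLast = histMoves s n := by
  rw [histMoves_succ]; simp

lemma histMoves_congr {s s' : ℕ → Ordinal} (n : ℕ) (h : ∀ k ≤ n, s k = s' k) :
    histMoves s n = histMoves s' n := by
  unfold histMoves
  apply List.map_congr_left
  intro a ha
  exact h a (by simpa [Nat.lt_succ_iff] using List.mem_range.mp ha)

lemma getD_append_left (l l' : List Ordinal) (k : ℕ) (hk : k < l.length) (x : Ordinal) :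
    (l ++ l').getD k x = l.getD k x := by
  simp [List.getD_eq_getElem?_getD, List.getElem?_append_left hk]

lemma getD_append_pair₁ (l : List Ordinal) (a b x : Ordinal) :
    (l ++ [a, b]).getD l.length x = a := by
  simp [List.getD_eq_getElem?_getD, List.getElem?_append_right (le_refl l.length)]

lemma getD_append_pair₂ (l : List Ordinal) (a b x : Ordinal) :
    (l ++ [a, b]).getD (l.length + 1) x = b := by
  have : l.length ≤ l.length + 1 := by omega
  simp [List.getD_eq_getElem?_getD, List.getElem?_append_right this]

end REFtrans
namespace REFtrans

/-- next move of II's simulated player I in game 1 (even side round). -/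
def A1 (u : Ordinal → Ordinal → Ordinal) (s : List Ordinal × List Ordinal) (x : Ordinal) :
    Ordinal :=
  if s.1.isEmpty then x else u (s.1.getLastD 0) x

/-- next move of II's simulated player I in game 2. -/
def E1 (σ₁ : List Ordinal → Ordinal) (u : Ordinal → Ordinal → Ordinal) (r : Ordinal → Ordinal)
    (s : List Ordinal × List Ordinal) (x : Ordinal) : Ordinal :=
  if s.2.isEmpty then u x (r (σ₁ (s.1 ++ [A1 u s x])))
  else u (s.2.getLastD 0) (u x (r (σ₁ (s.1 ++ [A1 u s x]))))

/-- next move of II's simulated player I in game 1 (odd side round). -/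
def A2 (σ₁ σ₂ : List Ordinal → Ordinal) (u : Ordinal → Ordinal → Ordinal)
    (r d : Ordinal → Ordinal) (s : List Ordinal × List Ordinal) (x : Ordinal) : Ordinal :=
  u (A1 u s x) (d (σ₂ (s.2 ++ [E1 σ₁ u r s x])))

def step (σ₁ σ₂ : List Ordinal → Ordinal) (u : Ordinal → Ordinal → Ordinal)
    (r d : Ordinal → Ordinal) (s : List Ordinal × List Ordinal) (x : Ordinal) :
    List Ordinal × List Ordinal :=
  (s.1 ++ [A1 u s x, A2 σ₁ σ₂ u r d s x], s.2 ++ [E1 σ₁ u r s x, E1 σ₁ u r s x])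

def st (σ₁ σ₂ : List Ordinal → Ordinal) (u : Ordinal → Ordinal → Ordinal)
    (r d : Ordinal → Ordinal) (l : List Ordinal) : List Ordinal × List Ordinal :=
  l.foldl (step σ₁ σ₂ u r d) ([], [])

lemma st_concat (σ₁ σ₂ : List Ordinal → Ordinal) (u : Ordinal → Ordinal → Ordinal)
    (r d : Ordinal → Ordinal) (l : List Ordinal) (x : Ordinal) :
    st σ₁ σ₂ u r d (l ++ [x]) = step σ₁ σ₂ u r d (st σ₁ σ₂ u r d l) x := by
  simp [st, List.foldl_append]

lemma st_len (σ₁ σ₂ : List Ordinal → Ordinal) (u : Ordinal → Ordinal → Ordinal)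
    (r d : Ordinal → Ordinal) (l : List Ordinal) :
    (st σ₁ σ₂ u r d l).1.length = 2 * l.length ∧
    (st σ₁ σ₂ u r d l).2.length = 2 * l.length := by
  induction l using List.reverseRecOn with
  | nil => simp [st]
  | append_singleton l x ih =>
    rw [st_concat]
    simp [step, ih.1, ih.2]
    omega

/-- from a winning strategy, II-legality at finitely many rounds follows from
I-legality at those rounds (by extending the play with constant repetitions). -/
lemma partialWin {L : Language} {A B : L.Structure Ordinal} {α : Ordinal}
    {X : Ordinal → Set Ordinal} {Fp : Ordinal → Set (Ordinal × Ordinal)}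
    {σ : List Ordinal → Ordinal} (h : IsWinRes A B α X Fp σ)
    (s : ℕ → Ordinal) (N : ℕ) (hs : ∀ m ≤ N, ILegalResAt α X s m) :
    ∀ m ≤ N, IILegalResAt α X Fp s (fun k => σ (histMoves s k)) m := by
  intro m hm
  have hagree : ∀ k ≤ N, s (min k N) = s k := fun k hk => by rw [Nat.min_eq_left hk]
  have hhist : ∀ k ≤ N, histMoves (fun j => s (min j N)) k = histMoves s k := fun k hk =>
    histMoves_congr k (fun j hj => hagree j (le_trans hj hk))
  have hleg : ∀ k, ILegalResAt α X (fun j => s (min j N)) k := by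
    intro k
    refine ⟨(hs _ (min_le_right k N)).1, (hs _ (min_le_right k N)).2.1, ?_⟩
    intro m' hm'
    subst hm'
    rcases le_or_gt (m' + 1) N with hle | hlt
    · have h3 := (hs _ hle).2.2 m' rfl
      simpa [Nat.min_eq_left hle, Nat.min_eq_left (Nat.le_of_succ_le hle)] using h3
    · have h1 : min (m' + 1) N = N := Nat.min_eq_right (by omega)
      have h2 : min m' N = N := Nat.min_eq_right (by omega)
      simp only [h1, h2]
      exact le_refl _
  obtain ⟨c1, c2, c3, c4, c5⟩ := (h _ hleg).1 m
  simp only [hhist m hm, Nat.min_eq_left hm] at c1 c2 c3 c4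
  refine ⟨c1, c2, c3, c4, ?_⟩
  intro m' hm'
  have h5 := c5 m' hm'
  have hm'N : m' ≤ N := by omega
  simp only [hhist m hm, hhist m' hm'N] at h5
  exact h5

end REFtrans
/-- Transitivity step for `R_EF^α`, for `α` closed under the coding functions:
if II has winning strategies in `EF^κ_ω(A↾α, B↾α)` and `EF^κ_ω(B↾α, C↾α)`, and
`α` is closed under the functions coding unions, ranges, domains and
compositions of the enumerated sets and partial functions, then II has a
winning strategy in `EF^κ_ω(A↾α, C↾α)`. -/
theorem REF_transitive (κ : Cardinal.{0}) (hκ : κ.IsRegular) (hκω : ℵ₀ < κ)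
    (L : Language) (A B C : L.Structure Ordinal)
    (X : Ordinal → Set Ordinal) (Fp : Ordinal → Set (Ordinal × Ordinal))
    (hEnum : GoodEnum κ X Fp)
    (α : Ordinal) (hα : α < κ.ord)
    -- `α` is closed under `h₃` (union of the coded sets):
    (hUnion : ∀ a b : Ordinal, a < α → b < α → ∃ γ < α, X γ = X a ∪ X b)
    -- `α` is closed under `h₄` (range of the coded partial functions):
    (hRan : ∀ a < α, ∃ γ < α, X γ = Prod.snd '' Fp a)
    -- `α` is closed under `h₅` (domain of the coded partial functions):
    (hDom : ∀ a < α, ∃ γ < α, X γ = Prod.fst '' Fp a)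
    -- `α` is closed under `h₆` (composition of the coded partial functions):
    (hComp : ∀ a b : Ordinal, a < α → b < α → ∃ γ < α,
      Fp γ = {p : Ordinal × Ordinal | ∃ y, (p.1, y) ∈ Fp b ∧ (y, p.2) ∈ Fp a})
    (σ₁ σ₂ : List Ordinal → Ordinal)
    (h₁ : IsWinRes A B α X Fp σ₁) (h₂ : IsWinRes B C α X Fp σ₂) :
    ∃ σ, IsWinRes A C α X Fp σ := by
  classical
  clear hEnum hκ hκω hα
  -- Skolemize the closure hypotheses into choice functions
  have hUnion' : ∀ a b : Ordinal, ∃ γ, a < α → b < α → γ < α ∧ X γ = X a ∪ X b := by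
    intro a b
    by_cases h : a < α ∧ b < α
    · obtain ⟨γ, h1, h2⟩ := hUnion a b h.1 h.2
      exact ⟨γ, fun _ _ => ⟨h1, h2⟩⟩
    · exact ⟨0, fun h1 h2 => absurd ⟨h1, h2⟩ h⟩
  choose u hu using hUnion'
  have hRan' : ∀ a : Ordinal, ∃ γ, a < α → γ < α ∧ X γ = Prod.snd '' Fp a := by
    intro a
    by_cases h : a < α
    · obtain ⟨γ, h1, h2⟩ := hRan a h
      exact ⟨γ, fun _ => ⟨h1, h2⟩⟩
    · exact ⟨0, fun h' => absurd h' h⟩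
  choose r hr using hRan'
  have hDom' : ∀ a : Ordinal, ∃ γ, a < α → γ < α ∧ X γ = Prod.fst '' Fp a := by
    intro a
    by_cases h : a < α
    · obtain ⟨γ, h1, h2⟩ := hDom a h
      exact ⟨γ, fun _ => ⟨h1, h2⟩⟩
    · exact ⟨0, fun h' => absurd h' h⟩
  choose d hd using hDom'
  have hComp' : ∀ a b : Ordinal, ∃ γ, a < α → b < α → γ < α ∧
      Fp γ = {p : Ordinal × Ordinal | ∃ y, (p.1, y) ∈ Fp b ∧ (y, p.2) ∈ Fp a} := by
    intro a b
    by_cases h : a < α ∧ b < α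
    · obtain ⟨γ, h1, h2⟩ := hComp a b h.1 h.2
      exact ⟨γ, fun _ _ => ⟨h1, h2⟩⟩
    · exact ⟨0, fun h1 h2 => absurd ⟨h1, h2⟩ h⟩
  choose c hc using hComp'
  clear hUnion hRan hDom hComp
  refine ⟨fun l => c (σ₂ ((REFtrans.st σ₁ σ₂ u r d l).2.dropLast))
      (σ₁ ((REFtrans.st σ₁ σ₂ u r d l).1)), ?_⟩
  intro β hβ
  set S : List Ordinal → List Ordinal × List Ordinal := REFtrans.st σ₁ σ₂ u r d with hSdef
  set b1 : ℕ → Ordinal := fun k => ((S (histMoves β (k / 2))).1).getD k 0 with hb1def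
  set b2 : ℕ → Ordinal := fun k => ((S (histMoves β (k / 2))).2).getD k 0 with hb2def
  have STAB : ∀ n, S (histMoves β (n + 1)) =
      REFtrans.step σ₁ σ₂ u r d (S (histMoves β n)) (β (n + 1)) := by
    intro n
    rw [hSdef, REFtrans.histMoves_succ, REFtrans.st_concat]
  have LEN1 : ∀ n, (S (histMoves β n)).1.length = 2 * n + 2 := by
    intro n
    have h := (REFtrans.st_len σ₁ σ₂ u r d (histMoves β n)).1
    rw [REFtrans.histMoves_length] at h
    rw [hSdef, h]; ring
  have LEN2 : ∀ n, (S (histMoves β n)).2.length = 2 * n + 2 := by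
    intro n
    have h := (REFtrans.st_len σ₁ σ₂ u r d (histMoves β n)).2
    rw [REFtrans.histMoves_length] at h
    rw [hSdef, h]; ring
  have S0 : S (histMoves β 0) = REFtrans.step σ₁ σ₂ u r d ([], []) (β 0) := by
    rw [hSdef, REFtrans.histMoves_zero]
    show REFtrans.st σ₁ σ₂ u r d ([] ++ [β 0]) = _
    rw [REFtrans.st_concat]
    rfl
  -- base entries
  have hb10 : b1 0 = β 0 := by
    show ((S (histMoves β (0 / 2))).1).getD 0 0 = β 0
    norm_num [S0, REFtrans.step, REFtrans.A1]
  have hb11 : b1 1 = REFtrans.A2 σ₁ σ₂ u r d ([], []) (β 0) := by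
    show ((S (histMoves β (1 / 2))).1).getD 1 0 = _
    norm_num [S0, REFtrans.step]
  have hb20 : b2 0 = REFtrans.E1 σ₁ u r ([], []) (β 0) := by
    show ((S (histMoves β (0 / 2))).2).getD 0 0 = _
    norm_num [S0, REFtrans.step]
  have hb21 : b2 1 = REFtrans.E1 σ₁ u r ([], []) (β 0) := by
    show ((S (histMoves β (1 / 2))).2).getD 1 0 = _
    norm_num [S0, REFtrans.step]
  -- step entries
  have EB1 : ∀ n, b1 (2 * n + 2) = REFtrans.A1 u (S (histMoves β n)) (β (n + 1)) := by
    intro n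
    show ((S (histMoves β ((2 * n + 2) / 2))).1).getD (2 * n + 2) 0 = _
    have h2 : (2 * n + 2) / 2 = n + 1 := by omega
    rw [h2, STAB n]
    simp only [REFtrans.step]
    have h3 := REFtrans.getD_append_pair₁ ((S (histMoves β n)).1)
      (REFtrans.A1 u (S (histMoves β n)) (β (n + 1)))
      (REFtrans.A2 σ₁ σ₂ u r d (S (histMoves β n)) (β (n + 1))) 0
    rw [LEN1 n] at h3
    exact h3
  have EB2 : ∀ n, b1 (2 * n + 3) = REFtrans.A2 σ₁ σ₂ u r d (S (histMoves β n)) (β (n + 1)) := by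
    intro n
    show ((S (histMoves β ((2 * n + 3) / 2))).1).getD (2 * n + 3) 0 = _
    have h2 : (2 * n + 3) / 2 = n + 1 := by omega
    rw [h2, STAB n]
    simp only [REFtrans.step]
    have h3 := REFtrans.getD_append_pair₂ ((S (histMoves β n)).1)
      (REFtrans.A1 u (S (histMoves β n)) (β (n + 1)))
      (REFtrans.A2 σ₁ σ₂ u r d (S (histMoves β n)) (β (n + 1))) 0
    rw [LEN1 n] at h3
    have h4 : 2 * n + 2 + 1 = 2 * n + 3 := by omega
    rw [h4] at h3
    exact h3
  have EE1 : ∀ n, b2 (2 * n + 2) = REFtrans.E1 σ₁ u r (S (histMoves β n)) (β (n + 1)) := by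
    intro n
    show ((S (histMoves β ((2 * n + 2) / 2))).2).getD (2 * n + 2) 0 = _
    have h2 : (2 * n + 2) / 2 = n + 1 := by omega
    rw [h2, STAB n]
    simp only [REFtrans.step]
    have h3 := REFtrans.getD_append_pair₁ ((S (histMoves β n)).2)
      (REFtrans.E1 σ₁ u r (S (histMoves β n)) (β (n + 1)))
      (REFtrans.E1 σ₁ u r (S (histMoves β n)) (β (n + 1))) 0
    rw [LEN2 n] at h3
    exact h3
  have EE2 : ∀ n, b2 (2 * n + 3) = REFtrans.E1 σ₁ u r (S (histMoves β n)) (β (n + 1)) := by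
    intro n
    show ((S (histMoves β ((2 * n + 3) / 2))).2).getD (2 * n + 3) 0 = _
    have h2 : (2 * n + 3) / 2 = n + 1 := by omega
    rw [h2, STAB n]
    simp only [REFtrans.step]
    have h3 := REFtrans.getD_append_pair₂ ((S (histMoves β n)).2)
      (REFtrans.E1 σ₁ u r (S (histMoves β n)) (β (n + 1)))
      (REFtrans.E1 σ₁ u r (S (histMoves β n)) (β (n + 1))) 0
    rw [LEN2 n] at h3
    have h4 : 2 * n + 2 + 1 = 2 * n + 3 := by omega
    rw [h4] at h3
    exact h3
  -- the state is exactly the pair of simulated histories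
  have KEY : ∀ n, (S (histMoves β n)).1 = histMoves b1 (2 * n + 1) ∧
      (S (histMoves β n)).2 = histMoves b2 (2 * n + 1) := by
    intro n
    induction n with
    | zero =>
      constructor
      · rw [S0]
        have e1 : histMoves b1 (2 * 0 + 1) = [b1 0] ++ [b1 1] := by
          norm_num [REFtrans.histMoves_succ, REFtrans.histMoves_zero]
        rw [e1, hb10, hb11]
        simp [REFtrans.step, REFtrans.A1]
      · rw [S0]
        have e1 : histMoves b2 (2 * 0 + 1) = [b2 0] ++ [b2 1] := by
          norm_num [REFtrans.histMoves_succ, REFtrans.histMoves_zero]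
        rw [e1, hb20, hb21]
        simp [REFtrans.step]
    | succ n ih =>
      have hh1 : histMoves b1 (2 * (n + 1) + 1) =
          histMoves b1 (2 * n + 1) ++ [b1 (2 * n + 2), b1 (2 * n + 3)] := by
        rw [show (2 * (n + 1) + 1 : ℕ) = (2 * n + 1) + 1 + 1 from by omega,
          show (2 * n + 2 : ℕ) = (2 * n + 1) + 1 from by omega,
          show (2 * n + 3 : ℕ) = (2 * n + 1) + 1 + 1 from by omega,
          REFtrans.histMoves_succ b1 ((2 * n + 1) + 1), REFtrans.histMoves_succ b1 (2 * n + 1)]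
        simp
      have hh2 : histMoves b2 (2 * (n + 1) + 1) =
          histMoves b2 (2 * n + 1) ++ [b2 (2 * n + 2), b2 (2 * n + 3)] := by
        rw [show (2 * (n + 1) + 1 : ℕ) = (2 * n + 1) + 1 + 1 from by omega,
          show (2 * n + 2 : ℕ) = (2 * n + 1) + 1 from by omega,
          show (2 * n + 3 : ℕ) = (2 * n + 1) + 1 + 1 from by omega,
          REFtrans.histMoves_succ b2 ((2 * n + 1) + 1), REFtrans.histMoves_succ b2 (2 * n + 1)]
        simp
      constructor
      · rw [STAB n]
        simp only [REFtrans.step]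
        rw [ih.1, hh1, EB1 n, EB2 n]
      · rw [STAB n]
        simp only [REFtrans.step]
        rw [ih.2, hh2, EE1 n, EE2 n]
  -- value recurrences
  have V1 : ∀ n, b1 (2 * n + 2) = u (b1 (2 * n + 1)) (β (n + 1)) := by
    intro n
    rw [EB1 n]
    simp [REFtrans.A1, (KEY n).1, REFtrans.histMoves_isEmpty, REFtrans.histMoves_getLastD, REFtrans.histMoves_getLast?]
  have Vt1 : ∀ n, (S (histMoves β n)).1 ++ [REFtrans.A1 u (S (histMoves β n)) (β (n + 1))] =
      histMoves b1 (2 * n + 2) := by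
    intro n
    rw [← EB1 n, (KEY n).1, show (2 * n + 2 : ℕ) = (2 * n + 1) + 1 from by omega,
      REFtrans.histMoves_succ b1 (2 * n + 1)]
  have V2 : ∀ n, b2 (2 * n + 2) =
      u (b2 (2 * n + 1)) (u (β (n + 1)) (r (σ₁ (histMoves b1 (2 * n + 2))))) := by
    intro n
    rw [EE1 n]
    simp only [REFtrans.E1, Vt1 n, (KEY n).2, REFtrans.histMoves_isEmpty,
      Bool.false_eq_true, if_false, REFtrans.histMoves_getLastD, REFtrans.histMoves_getLast?, Option.getD_some]
  have V2' : ∀ n, b2 (2 * n + 3) = b2 (2 * n + 2) := by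
    intro n
    rw [EE2 n, ← EE1 n]
  have V3 : ∀ n, b1 (2 * n + 3) = u (b1 (2 * n + 2)) (d (σ₂ (histMoves b2 (2 * n + 2)))) := by
    intro n
    have hE : (S (histMoves β n)).2 ++ [REFtrans.E1 σ₁ u r (S (histMoves β n)) (β (n + 1))] =
        histMoves b2 (2 * n + 2) := by
      rw [← EE1 n, (KEY n).2, show (2 * n + 2 : ℕ) = (2 * n + 1) + 1 from by omega,
        REFtrans.histMoves_succ b2 (2 * n + 1)]
    rw [EB2 n]
    simp only [REFtrans.A2, hE, ← EB1 n]
  have V20 : b2 0 = u (β 0) (r (σ₁ (histMoves b1 0))) := by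
    rw [hb20]
    simp [REFtrans.E1, REFtrans.A1, REFtrans.histMoves_zero, hb10]
  have V30 : b1 1 = u (b1 0) (d (σ₂ (histMoves b2 0))) := by
    rw [hb11, hb10]
    simp [REFtrans.A2, REFtrans.A1, REFtrans.histMoves_zero, hb20]
  -- legality of the simulated plays, by induction on rounds
  have hP : ∀ n, (∀ m ≤ 2 * n + 1, ILegalResAt α X b1 m) ∧
      (∀ m ≤ 2 * n + 1, ILegalResAt α X b2 m) := by
    intro n
    induction n with
    | zero =>
      have l10 : ILegalResAt α X b1 0 := by
        refine ⟨?_, ?_, ?_⟩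
        · rw [hb10]; exact (hβ 0).1
        · rw [hb10]; exact (hβ 0).2.1
        · intro m hm; exact absurd hm (by omega)
      have hl1 : ∀ m ≤ 0, ILegalResAt α X b1 m := fun m hm => by
        rw [Nat.le_zero.mp hm]; exact l10
      have t1lt0 : σ₁ (histMoves b1 0) < α := (REFtrans.partialWin h₁ b1 0 hl1 0 le_rfl).1
      have sq10 : Fp (σ₁ (histMoves b1 0)) ⊆ Set.Iio α ×ˢ Set.Iio α :=
        (REFtrans.partialWin h₁ b1 0 hl1 0 le_rfl).2.1
      have l20 : ILegalResAt α X b2 0 := by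
        refine ⟨?_, ?_, ?_⟩
        · rw [V20]; exact (hu _ _ (hβ 0).1 (hr _ t1lt0).1).1
        · rw [V20, (hu _ _ (hβ 0).1 (hr _ t1lt0).1).2, (hr _ t1lt0).2]
          refine Set.union_subset (hβ 0).2.1 ?_
          rintro x ⟨p, hp, rfl⟩
          exact (sq10 hp).2
        · intro m hm; exact absurd hm (by omega)
      have e10 : b2 1 = b2 0 := by rw [hb21, ← hb20]
      have l21 : ILegalResAt α X b2 1 := by
        refine ⟨?_, ?_, ?_⟩
        · rw [e10]; exact l20.1
        · rw [e10]; exact l20.2.1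
        · intro m hm
          have hm0 : m = 0 := by omega
          rw [hm0, e10]
      have hl2 : ∀ m ≤ 1, ILegalResAt α X b2 m := by
        intro m hm
        rcases (by omega : m = 0 ∨ m = 1) with h | h
        · rw [h]; exact l20
        · rw [h]; exact l21
      have t2lt0 : σ₂ (histMoves b2 0) < α :=
        (REFtrans.partialWin h₂ b2 1 hl2 0 (by omega)).1
      have sq20 : Fp (σ₂ (histMoves b2 0)) ⊆ Set.Iio α ×ˢ Set.Iio α :=
        (REFtrans.partialWin h₂ b2 1 hl2 0 (by omega)).2.1
      have l11 : ILegalResAt α X b1 1 := by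
        refine ⟨?_, ?_, ?_⟩
        · rw [V30]; exact (hu _ _ l10.1 (hd _ t2lt0).1).1
        · rw [V30, (hu _ _ l10.1 (hd _ t2lt0).1).2, (hd _ t2lt0).2]
          refine Set.union_subset l10.2.1 ?_
          rintro x ⟨p, hp, rfl⟩
          exact (sq20 hp).1
        · intro m hm
          have hm0 : m = 0 := by omega
          rw [hm0, V30, (hu _ _ l10.1 (hd _ t2lt0).1).2]
          exact Set.subset_union_left
      constructor
      · intro m hm
        rcases (by omega : m = 0 ∨ m = 1) with h | h
        · rw [h]; exact l10
        · rw [h]; exact l11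
      · exact fun m hm => hl2 m (by omega)
    | succ n ih =>
      obtain ⟨ih1, ih2⟩ := ih
      have l1a : ILegalResAt α X b1 (2 * n + 2) := by
        refine ⟨?_, ?_, ?_⟩
        · rw [V1 n]; exact (hu _ _ (ih1 _ le_rfl).1 (hβ (n + 1)).1).1
        · rw [V1 n, (hu _ _ (ih1 _ le_rfl).1 (hβ (n + 1)).1).2]
          exact Set.union_subset (ih1 _ le_rfl).2.1 (hβ (n + 1)).2.1
        · intro m hm
          have hm' : m = 2 * n + 1 := by omega
          rw [hm', V1 n, (hu _ _ (ih1 _ le_rfl).1 (hβ (n + 1)).1).2]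
          exact Set.subset_union_left
      have hl1 : ∀ m ≤ 2 * n + 2, ILegalResAt α X b1 m := by
        intro m hm
        rcases (by omega : m ≤ 2 * n + 1 ∨ m = 2 * n + 2) with h | h
        · exact ih1 m h
        · rw [h]; exact l1a
      have t1lt : σ₁ (histMoves b1 (2 * n + 2)) < α :=
        (REFtrans.partialWin h₁ b1 (2 * n + 2) hl1 _ le_rfl).1
      have sq1 : Fp (σ₁ (histMoves b1 (2 * n + 2))) ⊆ Set.Iio α ×ˢ Set.Iio α :=
        (REFtrans.partialWin h₁ b1 (2 * n + 2) hl1 _ le_rfl).2.1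
      have l2a : ILegalResAt α X b2 (2 * n + 2) := by
        have inn := hu _ _ (hβ (n + 1)).1 (hr _ t1lt).1
        refine ⟨?_, ?_, ?_⟩
        · rw [V2 n]; exact (hu _ _ (ih2 _ le_rfl).1 inn.1).1
        · rw [V2 n, (hu _ _ (ih2 _ le_rfl).1 inn.1).2, inn.2, (hr _ t1lt).2]
          refine Set.union_subset (ih2 _ le_rfl).2.1
            (Set.union_subset (hβ (n + 1)).2.1 ?_)
          rintro x ⟨p, hp, rfl⟩
          exact (sq1 hp).2
        · intro m hm
          have hm' : m = 2 * n + 1 := by omega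
          rw [hm', V2 n, (hu _ _ (ih2 _ le_rfl).1 inn.1).2]
          exact Set.subset_union_left
      have l2b : ILegalResAt α X b2 (2 * n + 3) := by
        refine ⟨?_, ?_, ?_⟩
        · rw [V2' n]; exact l2a.1
        · rw [V2' n]; exact l2a.2.1
        · intro m hm
          have hm' : m = 2 * n + 2 := by omega
          rw [hm', V2' n]
      have hl2 : ∀ m ≤ 2 * n + 3, ILegalResAt α X b2 m := by
        intro m hm
        rcases (by omega : m ≤ 2 * n + 1 ∨ m = 2 * n + 2 ∨ m = 2 * n + 3) with h | h | h
        · exact ih2 m h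
        · rw [h]; exact l2a
        · rw [h]; exact l2b
      have t2lt : σ₂ (histMoves b2 (2 * n + 2)) < α :=
        (REFtrans.partialWin h₂ b2 (2 * n + 3) hl2 _ (by omega)).1
      have sq2 : Fp (σ₂ (histMoves b2 (2 * n + 2))) ⊆ Set.Iio α ×ˢ Set.Iio α :=
        (REFtrans.partialWin h₂ b2 (2 * n + 3) hl2 _ (by omega)).2.1
      have l1b : ILegalResAt α X b1 (2 * n + 3) := by
        refine ⟨?_, ?_, ?_⟩
        · rw [V3 n]; exact (hu _ _ l1a.1 (hd _ t2lt).1).1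
        · rw [V3 n, (hu _ _ l1a.1 (hd _ t2lt).1).2, (hd _ t2lt).2]
          refine Set.union_subset l1a.2.1 ?_
          rintro x ⟨p, hp, rfl⟩
          exact (sq2 hp).1
        · intro m hm
          have hm' : m = 2 * n + 2 := by omega
          rw [hm', V3 n, (hu _ _ l1a.1 (hd _ t2lt).1).2]
          exact Set.subset_union_left
      constructor
      · intro m hm
        rcases (by omega : m ≤ 2 * n + 2 ∨ m = 2 * n + 3) with h | h
        · exact hl1 m h
        · rw [h]; exact l1b
      · intro m hm
        exact hl2 m (by omega)
  have Leg1 : ∀ m, ILegalResAt α X b1 m := fun m => (hP m).1 m (by omega)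
  have Leg2 : ∀ m, ILegalResAt α X b2 m := fun m => (hP m).2 m (by omega)
  obtain ⟨II1, iso1⟩ := h₁ b1 Leg1
  obtain ⟨II2, iso2⟩ := h₂ b2 Leg2
  have T1lt : ∀ m, σ₁ (histMoves b1 m) < α := fun m => (II1 m).1
  have T1sq : ∀ m, Fp (σ₁ (histMoves b1 m)) ⊆ Set.Iio α ×ˢ Set.Iio α := fun m => (II1 m).2.1
  have T1f : ∀ m, X (b1 m) ⊆ Prod.fst '' Fp (σ₁ (histMoves b1 m)) := fun m => (II1 m).2.2.1
  have T1s : ∀ m, X (b1 m) ⊆ Prod.snd '' Fp (σ₁ (histMoves b1 m)) := fun m => (II1 m).2.2.2.1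
  have T1m : ∀ m, Fp (σ₁ (histMoves b1 m)) ⊆ Fp (σ₁ (histMoves b1 (m + 1))) :=
    fun m => (II1 (m + 1)).2.2.2.2 m rfl
  have T2lt : ∀ m, σ₂ (histMoves b2 m) < α := fun m => (II2 m).1
  have T2sq : ∀ m, Fp (σ₂ (histMoves b2 m)) ⊆ Set.Iio α ×ˢ Set.Iio α := fun m => (II2 m).2.1
  have T2f : ∀ m, X (b2 m) ⊆ Prod.fst '' Fp (σ₂ (histMoves b2 m)) := fun m => (II2 m).2.2.1
  have T2s : ∀ m, X (b2 m) ⊆ Prod.snd '' Fp (σ₂ (histMoves b2 m)) := fun m => (II2 m).2.2.2.1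
  have T2m : ∀ m, Fp (σ₂ (histMoves b2 m)) ⊆ Fp (σ₂ (histMoves b2 (m + 1))) :=
    fun m => (II2 (m + 1)).2.2.2.2 m rfl
  -- the X-sets of the simulated moves
  have XB1 : ∀ n, X (b1 (2 * n + 2)) = X (b1 (2 * n + 1)) ∪ X (β (n + 1)) := fun n => by
    rw [V1 n]; exact (hu _ _ (Leg1 (2 * n + 1)).1 (hβ (n + 1)).1).2
  have XB2 : ∀ n, X (b2 (2 * n + 2)) = X (b2 (2 * n + 1)) ∪
      (X (β (n + 1)) ∪ Prod.snd '' Fp (σ₁ (histMoves b1 (2 * n + 2)))) := fun n => by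
    have inn := hu _ _ (hβ (n + 1)).1 (hr _ (T1lt (2 * n + 2))).1
    rw [V2 n, (hu _ _ (Leg2 (2 * n + 1)).1 inn.1).2, inn.2, (hr _ (T1lt (2 * n + 2))).2]
  have XB20 : X (b2 0) = X (β 0) ∪ Prod.snd '' Fp (σ₁ (histMoves b1 0)) := by
    rw [V20, (hu _ _ (hβ 0).1 (hr _ (T1lt 0)).1).2, (hr _ (T1lt 0)).2]
  have XB3 : ∀ n, X (b1 (2 * n + 3)) = X (b1 (2 * n + 2)) ∪
      Prod.fst '' Fp (σ₂ (histMoves b2 (2 * n + 2))) := fun n => by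
    rw [V3 n, (hu _ _ (Leg1 (2 * n + 2)).1 (hd _ (T2lt (2 * n + 2))).1).2,
      (hd _ (T2lt (2 * n + 2))).2]
  have XB30 : X (b1 1) = X (b1 0) ∪ Prod.fst '' Fp (σ₂ (histMoves b2 0)) := by
    rw [V30, (hu _ _ (Leg1 0).1 (hd _ (T2lt 0)).1).2, (hd _ (T2lt 0)).2]
  -- coverage facts
  have CXb1 : ∀ n, X (β n) ⊆ X (b1 (2 * n)) := by
    intro n
    cases n with
    | zero => rw [show (2 * 0 : ℕ) = 0 from rfl, hb10]
    | succ m =>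
      rw [show (2 * (m + 1) : ℕ) = 2 * m + 2 from by omega, XB1 m]
      exact Set.subset_union_right
  have CXb2 : ∀ n, X (β n) ⊆ X (b2 (2 * n)) := by
    intro n
    cases n with
    | zero => rw [show (2 * 0 : ℕ) = 0 from rfl, XB20]; exact Set.subset_union_left
    | succ m =>
      rw [show (2 * (m + 1) : ℕ) = 2 * m + 2 from by omega, XB2 m]
      exact Set.subset_union_of_subset_right Set.subset_union_left _
  have CY : ∀ n, Prod.snd '' Fp (σ₁ (histMoves b1 (2 * n))) ⊆ X (b2 (2 * n)) := by
    intro n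
    cases n with
    | zero => rw [show (2 * 0 : ℕ) = 0 from rfl, XB20]; exact Set.subset_union_right
    | succ m =>
      rw [show (2 * (m + 1) : ℕ) = 2 * m + 2 from by omega, XB2 m]
      exact Set.subset_union_of_subset_right Set.subset_union_right _
  have CD : ∀ n, Prod.fst '' Fp (σ₂ (histMoves b2 (2 * n))) ⊆ X (b1 (2 * n + 1)) := by
    intro n
    cases n with
    | zero =>
      show Prod.fst '' Fp (σ₂ (histMoves b2 0)) ⊆ X (b1 1)
      rw [XB30]; exact Set.subset_union_right
    | succ m =>
      rw [show (2 * (m + 1) : ℕ) = 2 * m + 2 from by omega,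
        show (2 * m + 2 + 1 : ℕ) = 2 * m + 3 from by omega, XB3 m]
      exact Set.subset_union_right
  -- the played strategy values
  have TH : ∀ n, c (σ₂ ((S (histMoves β n)).2.dropLast)) (σ₁ ((S (histMoves β n)).1)) =
      c (σ₂ (histMoves b2 (2 * n))) (σ₁ (histMoves b1 (2 * n + 1))) := by
    intro n
    rw [(KEY n).1, (KEY n).2, REFtrans.histMoves_dropLast]
  have hθ : ∀ n, c (σ₂ (histMoves b2 (2 * n))) (σ₁ (histMoves b1 (2 * n + 1))) < α ∧
      Fp (c (σ₂ (histMoves b2 (2 * n))) (σ₁ (histMoves b1 (2 * n + 1)))) =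
        {p : Ordinal × Ordinal | ∃ y, (p.1, y) ∈ Fp (σ₁ (histMoves b1 (2 * n + 1))) ∧
          (y, p.2) ∈ Fp (σ₂ (histMoves b2 (2 * n)))} :=
    fun n => hc _ _ (T2lt (2 * n)) (T1lt (2 * n + 1))
  constructor
  · -- II's moves are legal
    intro n
    refine ⟨?_, ?_, ?_, ?_, ?_⟩
    · show c (σ₂ ((S (histMoves β n)).2.dropLast)) (σ₁ ((S (histMoves β n)).1)) < α
      rw [TH n]; exact (hθ n).1
    · show Fp (c (σ₂ ((S (histMoves β n)).2.dropLast)) (σ₁ ((S (histMoves β n)).1))) ⊆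
        Set.Iio α ×ˢ Set.Iio α
      rw [TH n, (hθ n).2]
      rintro ⟨z, x⟩ ⟨y, hy1, hy2⟩
      exact ⟨(T1sq _ hy1).1, (T2sq _ hy2).2⟩
    · show X (β n) ⊆ Prod.fst ''
        Fp (c (σ₂ ((S (histMoves β n)).2.dropLast)) (σ₁ ((S (histMoves β n)).1)))
      rw [TH n, (hθ n).2]
      intro z hz
      obtain ⟨p, hp, hpz⟩ := T1f (2 * n) (CXb1 n hz)
      have hp' : (z, p.2) ∈ Fp (σ₁ (histMoves b1 (2 * n))) := by
        have hzp : (z, p.2) = p := by rw [← hpz]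
        rw [hzp]; exact hp
      have hy : p.2 ∈ X (b2 (2 * n)) := CY n ⟨(z, p.2), hp', rfl⟩
      obtain ⟨q, hq, hqy⟩ := T2f (2 * n) hy
      have hq' : (p.2, q.2) ∈ Fp (σ₂ (histMoves b2 (2 * n))) := by
        have hzq : (p.2, q.2) = q := by rw [← hqy]
        rw [hzq]; exact hq
      exact ⟨(z, q.2), ⟨p.2, T1m (2 * n) hp', hq'⟩, rfl⟩
    · show X (β n) ⊆ Prod.snd ''
        Fp (c (σ₂ ((S (histMoves β n)).2.dropLast)) (σ₁ ((S (histMoves β n)).1)))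
      rw [TH n, (hθ n).2]
      intro x hx
      obtain ⟨q, hq, hqx⟩ := T2s (2 * n) (CXb2 n hx)
      have hq' : (q.1, x) ∈ Fp (σ₂ (histMoves b2 (2 * n))) := by
        have hzq : (q.1, x) = q := by rw [← hqx]
        rw [hzq]; exact hq
      have hy : q.1 ∈ X (b1 (2 * n + 1)) := CD n ⟨(q.1, x), hq', rfl⟩
      obtain ⟨p, hp, hpy⟩ := T1s (2 * n + 1) hy
      have hp' : (p.1, q.1) ∈ Fp (σ₁ (histMoves b1 (2 * n + 1))) := by
        have hzp : (p.1, q.1) = p := by rw [← hpy]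
        rw [hzp]; exact hp
      exact ⟨(p.1, x), ⟨q.1, hp', hq'⟩, rfl⟩
    · intro m hm
      subst hm
      show Fp (c (σ₂ ((S (histMoves β m)).2.dropLast)) (σ₁ ((S (histMoves β m)).1))) ⊆
        Fp (c (σ₂ ((S (histMoves β (m + 1))).2.dropLast)) (σ₁ ((S (histMoves β (m + 1))).1)))
      rw [TH m, TH (m + 1), (hθ m).2, (hθ (m + 1)).2]
      rintro ⟨z, x⟩ ⟨y, hy1, hy2⟩
      refine ⟨y, ?_, ?_⟩
      · have s1 := Set.Subset.trans (T1m (2 * m + 1)) (T1m (2 * m + 1 + 1))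
        rw [show (2 * m + 1 + 1 + 1 : ℕ) = 2 * (m + 1) + 1 from by omega] at s1
        exact s1 hy1
      · have s2 := Set.Subset.trans (T2m (2 * m)) (T2m (2 * m + 1))
        rw [show (2 * m + 1 + 1 : ℕ) = 2 * (m + 1) from by omega] at s2
        exact s2 hy2
  · -- the union of the played functions is a partial isomorphism
    show IsPartialIso A C
      (⋃ n, Fp (c (σ₂ ((S (histMoves β n)).2.dropLast)) (σ₁ ((S (histMoves β n)).1))))
    have e : (⋃ n, Fp (c (σ₂ ((S (histMoves β n)).2.dropLast)) (σ₁ ((S (histMoves β n)).1)))) =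
        ⋃ n, Fp (c (σ₂ (histMoves b2 (2 * n))) (σ₁ (histMoves b1 (2 * n + 1)))) :=
      Set.iUnion_congr fun n => congrArg Fp (TH n)
    rw [e]
    have memθ : ∀ p ∈ (⋃ n, Fp (c (σ₂ (histMoves b2 (2 * n))) (σ₁ (histMoves b1 (2 * n + 1))))),
        ∃ y, (p.1, y) ∈ (⋃ m, Fp (σ₁ (histMoves b1 m))) ∧
          (y, p.2) ∈ (⋃ m, Fp (σ₂ (histMoves b2 m))) := by
      intro p hp
      obtain ⟨n, hn⟩ := Set.mem_iUnion.mp hp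
      rw [(hθ n).2] at hn
      obtain ⟨y, h1, h2⟩ := hn
      exact ⟨y, Set.mem_iUnion.mpr ⟨2 * n + 1, h1⟩, Set.mem_iUnion.mpr ⟨2 * n, h2⟩⟩
    refine ⟨?_, ?_, ?_⟩
    · intro p hp q hq hpq
      obtain ⟨y, hy1, hy2⟩ := memθ p hp
      obtain ⟨y', hy1', hy2'⟩ := memθ q hq
      have hyy : y = y' := iso1.1 (p.1, y) hy1 (q.1, y') hy1' hpq
      exact iso2.1 (y, p.2) hy2 (y', q.2) hy2' hyy
    · intro p hp q hq hpq
      obtain ⟨y, hy1, hy2⟩ := memθ p hp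
      obtain ⟨y', hy1', hy2'⟩ := memθ q hq
      have hyy : y = y' := iso2.2.1 (y, p.2) hy2 (y', q.2) hy2' hpq
      exact iso1.2.1 (p.1, y) hy1 (q.1, y') hy1' hyy
    · intro n R v hv
      choose y hy1 hy2 using fun i => memθ (v i) (hv i)
      have i1 := iso1.2.2 n R (fun i => ((v i).1, y i)) (fun i => hy1 i)
      have i2 := iso2.2.2 n R (fun i => (y i, (v i).2)) (fun i => hy2 i)
      exact i1.trans i2
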